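/- Let x₁ : ℝ → ℝ be continuously differentiable with x₁(λ₀) = −2 and x₁′(λ₀) ≠ 0, and consider the one-parameter family of canonical quadratic maps g₂(x, λ) = x − x(x − x₁(λ)). Then the zero fixed point undergoes a period-doubling bifurcation at λ = λ₀: there exist an open interval I around 0 and a C¹ function p : I → ℝ with p(0) = λ₀ such that g₂(g₂(x, p(x)), p(x)) = x for every x ∈ I, while g₂(x, p(x)) ≠ x for every x ∈ I with x ≠ 0. -/

import Mathlib

/-- period-doubling bifurcation of the zero fixed point of the
canonical quadratic map family at a parameter value where `x₁(λ₀) = -2`. -/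
theorem stmt_6 (x₁ : ℝ → ℝ) (hx₁ : ContDiff ℝ 1 x₁) (lam₀ : ℝ)
    (h0 : x₁ lam₀ = -2) (h1 : deriv x₁ lam₀ ≠ 0) :
    let g : ℝ → ℝ → ℝ := fun x lam => x - x * (x - x₁ lam)
    ∃ (a b : ℝ), a < 0 ∧ 0 < b ∧
      ∃ p : ℝ → ℝ, ContDiffOn ℝ 1 p (Set.Ioo a b) ∧ p 0 = lam₀ ∧
        ∀ x ∈ Set.Ioo a b, g (g x (p x)) (p x) = x ∧ (x ≠ 0 → g x (p x) ≠ x) := by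
  intro g
  -- the curve of period-2 parameter values (in terms of a = x₁ λ)
  set q : ℝ → ℝ := fun x => -2 + x ^ 2 / (x - 1) with hq
  have hq0 : q 0 = -2 := by simp [hq]
  -- inverse function theorem setup for x₁
  have hCat : ContDiffAt ℝ 1 x₁ lam₀ := hx₁.contDiffAt
  have hderiv : HasDerivAt x₁ (deriv x₁ lam₀) lam₀ :=
    ((hx₁.differentiable one_ne_zero) lam₀).hasDerivAt
  set u : ℝˣ := Units.mk0 _ h1 with hu
  have hf' : HasFDerivAt x₁
      ((ContinuousLinearEquiv.unitsEquivAut ℝ u : ℝ ≃L[ℝ] ℝ) : ℝ →L[ℝ] ℝ) lam₀ := hderiv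
  set inv : ℝ → ℝ := hCat.localInverse hf' one_ne_zero with hinv
  have hinv0 : inv (-2) = lam₀ := by
    have := hCat.localInverse_apply_image hf' one_ne_zero
    rwa [h0] at this
  have hinvC : ContDiffAt ℝ 1 inv (-2) := by
    have := hCat.to_localInverse hf' one_ne_zero
    rwa [h0] at this
  have hright : ∀ᶠ y in nhds (-2 : ℝ), x₁ (inv y) = y := by
    have := (hCat.hasStrictFDerivAt' hf' one_ne_zero).eventually_right_inverse
    rwa [h0] at this
  -- neighborhood where inv is C¹ and a right inverse
  obtain ⟨U, hU, hUC⟩ := hinvC.contDiffOn le_rfl (by simp)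
  obtain ⟨T, hT, hTr⟩ := Filter.eventually_iff_exists_mem.mp hright
  -- pull back along q, which is continuous at 0
  have hqc : ContinuousAt q 0 := by
    apply ContinuousAt.add continuousAt_const
    exact (continuousAt_pow _ _).div (continuousAt_id.sub continuousAt_const) (by norm_num)
  have hmem : U ∩ T ∈ nhds (-2 : ℝ) := Filter.inter_mem hU hT
  have hpre : q ⁻¹' (U ∩ T) ∈ nhds (0 : ℝ) :=
    hqc (show U ∩ T ∈ nhds (q 0) by rw [hq0]; exact hmem)
  obtain ⟨ε, hε, hball⟩ := Metric.mem_nhds_iff.mp hpre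
  set δ : ℝ := min ε 1 / 2 with hδ
  have hδpos : 0 < δ := by positivity
  have hδε : δ < ε := by
    have h := min_le_left ε 1
    rw [hδ]; linarith
  have hδ1 : δ ≤ 1 / 2 := by
    have h := min_le_right ε 1
    rw [hδ]; linarith
  refine ⟨-δ, δ, by linarith, hδpos, inv ∘ q, ?_, ?_, ?_⟩
  · -- C¹ on the interval
    have hqC : ContDiffOn ℝ 1 q (Set.Ioo (-δ) δ) := by
      apply ContDiffOn.add contDiffOn_const
      apply ContDiffOn.div (ContDiffOn.pow contDiffOn_id 2)
        (ContDiffOn.sub contDiffOn_id contDiffOn_const)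
      intro x hx
      have hx1 : x < 1 := lt_of_lt_of_le hx.2 (by linarith)
      simp only [id_eq]
      exact sub_ne_zero.mpr (ne_of_lt hx1)
    apply hUC.comp hqC
    intro x hx
    have : q x ∈ U ∩ T := by
      apply hball
      simp only [Metric.mem_ball, Real.dist_eq, sub_zero]
      rw [abs_lt]; constructor <;> [linarith [hx.1]; linarith [hx.2]]
    exact this.1
  · simp only [Function.comp_apply, hq0, hinv0]
  · intro x hx
    have hxU : q x ∈ U ∩ T := by
      apply hball
      simp only [Metric.mem_ball, Real.dist_eq, sub_zero]
      rw [abs_lt]; constructor <;> [linarith [hx.1]; linarith [hx.2]]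
    have hxr : x₁ ((inv ∘ q) x) = q x := hTr _ hxU.2
    have hx1 : x - 1 ≠ 0 := by
      have : x < 1 := lt_of_lt_of_le hx.2 (by linarith)
      intro h; rw [sub_eq_zero] at h; exact absurd h (ne_of_lt this)
    have key1 : ∀ lam : ℝ, x₁ lam = q x → g (g x lam) lam = x := by
      intro lam hl
      show (x - x * (x - x₁ lam)) -
        (x - x * (x - x₁ lam)) * ((x - x * (x - x₁ lam)) - x₁ lam) = x
      rw [hl, hq]
      field_simp
      ring
    constructor
    · exact key1 _ hxr
    · intro hx0
      show x - x * (x - x₁ ((inv ∘ q) x)) ≠ x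
      rw [hxr]
      intro h
      have h2 : x * (x - q x) = 0 := by linarith
      rcases mul_eq_zero.mp h2 with h3 | h3
      · exact hx0 h3
      · have hqle : q x ≤ -2 := by
          have hneg : x - 1 < 0 := by
            have : x < 1 := lt_of_lt_of_le hx.2 (by linarith)
            linarith
          have : x ^ 2 / (x - 1) ≤ 0 :=
            div_nonpos_of_nonneg_of_nonpos (sq_nonneg x) (le_of_lt hneg)
          simp only [hq]; linarith
        have hxgt : x > -1 := by linarith [hx.1]
        rw [sub_eq_zero] at h3
        rw [← h3] at hqle
        linarith
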